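/- Let a, b, c, d' be integers with gcd(a,b) = 1, and suppose d = b·d' where (a/b, c/d) is a rational point in lowest terms on an integral Weierstrass curve, so that b³c² + A₁acb²·bd' + A₃cb³·bd' = a³b²d'² + A₂a²b·b²d'² + A₄ab²·b²d'² + A₆b³·b²d'² holds. Then d' divides b. -/

import Mathlib

/-- Let `a, b, c, d'` be integers with `gcd(a,b) = 1`, and suppose
`d = b·d'` where `(a/b, c/d)` is a rational point in lowest terms on an integral
Weierstrass curve, so that
`b³c² + A₁acb²·bd' + A₃cb³·bd' = a³b²d'² + A₂a²b·b²d'² + A₄ab²·b²d'² + A₆b³·b²d'²`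
holds.  Then `d'` divides `b`. -/
theorem d'_dvd_b_of_weierstrass_relation
    (a b c d' A1 A2 A3 A4 A6 : ℤ) (hab : IsCoprime a b) (hcd : IsCoprime c (b * d'))
    (h : b ^ 3 * c ^ 2 + A1 * a * c * b ^ 2 * (b * d') + A3 * c * b ^ 3 * (b * d')
        = a ^ 3 * (b ^ 2 * d' ^ 2) + A2 * a ^ 2 * b * (b ^ 2 * d' ^ 2)
          + A4 * a * b ^ 2 * (b ^ 2 * d' ^ 2) + A6 * b ^ 3 * (b ^ 2 * d' ^ 2)) :
    d' ∣ b := by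
  rcases eq_or_ne b 0 with hb | hb
  · simp [hb]
  -- introduce the gcd of d' and b
  have hgpos : 0 < Int.gcd d' b := Int.gcd_pos_of_ne_zero_right d' hb
  have hcop0 : IsCoprime (d' / (Int.gcd d' b : ℤ)) (b / (Int.gcd d' b : ℤ)) := by
    rw [Int.isCoprime_iff_gcd_eq_one]
    exact Int.gcd_div_gcd_div_gcd hgpos
  have hg0 : (Int.gcd d' b : ℤ) ≠ 0 := by
    exact_mod_cast hgpos.ne'
  obtain ⟨e, he⟩ : (Int.gcd d' b : ℤ) ∣ d' := Int.gcd_dvd_left d' b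
  obtain ⟨f, hf⟩ : (Int.gcd d' b : ℤ) ∣ b := Int.gcd_dvd_right d' b
  set g : ℤ := (Int.gcd d' b : ℤ) with hgdef
  have hedef : e = d' / g := by rw [he, Int.mul_ediv_cancel_left _ hg0]
  have hfdef : f = b / g := by rw [hf, Int.mul_ediv_cancel_left _ hg0]
  have hef : IsCoprime e f := by rw [hedef, hfdef]; exact hcop0
  have hf0 : f ≠ 0 := by
    rintro rfl
    exact hb (by simpa using hf)
  -- rewrite the Weierstrass relation in terms of g, e, f and cancel g^3 * f^2
  rw [he, hf] at h
  have key : f * c ^ 2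
      = e * (g * e * (a ^ 3 + A2 * a ^ 2 * (g * f) + A4 * a * (g * f) ^ 2 + A6 * (g * f) ^ 3)
          - g * f * c * (A1 * a + A3 * (g * f))) := by
    have hmul : (g ^ 3 * f ^ 2) ≠ 0 := by positivity
    apply mul_left_cancel₀ hmul
    linear_combination h
  have hdvd : e ∣ f * c ^ 2 := ⟨_, key⟩
  -- e is coprime to f and to c, hence a unit
  have hce : IsCoprime c e := by
    have : IsCoprime c d' := hcd.of_isCoprime_of_dvd_right (dvd_mul_left _ _)
    exact this.of_isCoprime_of_dvd_right ⟨g, by rw [he]; ring⟩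
  have hecop : IsCoprime e (f * c ^ 2) :=
    hef.mul_right hce.symm.pow_right
  have hu : IsUnit e := hecop.isUnit_of_dvd' dvd_rfl hdvd
  -- therefore d' = g * e divides g, which divides b
  have hd'g : d' ∣ g := by
    rw [he]
    exact (hu.mul_right_dvd).mpr dvd_rfl
  exact hd'g.trans ⟨f, hf⟩
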